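/- For every real A ≥ 1 and b > 0, ∫₀^∞ min{ 1, A·exp(−(t/b)²) } dt ≤ b·√(log A) + b·√π/2. -/

import Mathlib

open MeasureTheory Real

theorem integral_min_one_gaussian_tail_bound
    (A b : ℝ) (hA : 1 ≤ A) (hb : 0 < b) :
    ∫ t in Set.Ici (0 : ℝ), min 1 (A * Real.exp (-(t / b) ^ 2)) ≤
      b * Real.sqrt (Real.log A) + b * Real.sqrt π / 2 := by
  set t₀ := b * Real.sqrt (Real.log A) with ht₀def
  have hlogA : 0 ≤ Real.log A := Real.log_nonneg hA
  have ht₀0 : 0 ≤ t₀ := mul_nonneg hb.le (Real.sqrt_nonneg _)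
  have hA0 : 0 < A := lt_of_lt_of_le one_pos hA
  have hb2 : (0:ℝ) < 1 / b ^ 2 := by positivity
  have hexp_eq : ∀ t : ℝ, Real.exp (-(t / b) ^ 2) = Real.exp (-(1 / b ^ 2) * t ^ 2) := by
    intro t; congr 1; rw [div_pow]; ring
  have hgauss : Integrable (fun t : ℝ => A * Real.exp (-(t / b) ^ 2)) := by
    have h := (integrable_exp_neg_mul_sq hb2).const_mul A
    refine h.congr ?_
    filter_upwards with t
    rw [hexp_eq]
  have hmin_nonneg : ∀ t : ℝ, 0 ≤ min 1 (A * Real.exp (-(t / b) ^ 2)) := by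
    intro t; exact le_min zero_le_one (by positivity)
  have hcont : Continuous fun t : ℝ => min 1 (A * Real.exp (-(t / b) ^ 2)) :=
    continuous_const.min (continuous_const.mul (((continuous_id.div_const b).pow 2).neg.rexp))
  have hint : Integrable (fun t : ℝ => min 1 (A * Real.exp (-(t / b) ^ 2))) := by
    refine hgauss.mono' hcont.aestronglyMeasurable ?_
    filter_upwards with t
    rw [Real.norm_eq_abs, abs_of_nonneg (hmin_nonneg t)]
    exact min_le_right _ _
  have ht₀sq : t₀ ^ 2 = b ^ 2 * Real.log A := by
    rw [ht₀def, mul_pow, Real.sq_sqrt hlogA]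
  -- split
  rw [MeasureTheory.integral_Ici_eq_integral_Ioi,
    ← Set.Ioc_union_Ioi_eq_Ioi ht₀0,
    MeasureTheory.setIntegral_union (Set.Ioc_disjoint_Ioi le_rfl) measurableSet_Ioi
      hint.integrableOn hint.integrableOn]
  have h1 : ∫ t in Set.Ioc 0 t₀, min 1 (A * Real.exp (-(t / b) ^ 2)) ≤ t₀ := by
    calc ∫ t in Set.Ioc 0 t₀, min 1 (A * Real.exp (-(t / b) ^ 2))
        ≤ ∫ _ in Set.Ioc 0 t₀, (1:ℝ) := by
          refine setIntegral_mono_on hint.integrableOn ((integrableOn_const_iff (C := (1:ℝ))).mpr (Or.inr measure_Ioc_lt_top))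
            measurableSet_Ioc ?_
          intro t _; exact min_le_left _ _
      _ = t₀ := by simp [Real.volume_Ioc, ht₀0]
  have h2 : ∫ t in Set.Ioi t₀, min 1 (A * Real.exp (-(t / b) ^ 2)) ≤ b * Real.sqrt π / 2 := by
    have hkey : ∀ t ∈ Set.Ioi t₀, min 1 (A * Real.exp (-(t / b) ^ 2))
        ≤ Real.exp (-((t - t₀) / b) ^ 2) := by
      intro t ht
      refine le_trans (min_le_right _ _) ?_
      rw [← Real.exp_log hA0, ← Real.exp_add, Real.exp_le_exp]
      have h2t : 0 ≤ 2 * t₀ * (t - t₀) := by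
        have := le_of_lt (Set.mem_Ioi.mp ht)
        nlinarith
      rw [div_pow, div_pow]
      rw [← sub_nonneg]
      have hb2' : (0:ℝ) < b ^ 2 := by positivity
      have : -((t - t₀) ^ 2 / b ^ 2) - (Real.log A + -(t ^ 2 / b ^ 2))
          = (t ^ 2 - (t - t₀) ^ 2 - t₀ ^ 2) / b ^ 2 := by
        rw [ht₀sq]; field_simp; ring
      rw [this]
      apply div_nonneg _ hb2'.le
      nlinarith
    have hshift : Integrable (fun t : ℝ => Real.exp (-((t - t₀) / b) ^ 2)) := by
      have h := integrable_exp_neg_mul_sq hb2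
      have := h.comp_sub_right t₀
      refine this.congr ?_
      filter_upwards with t
      rw [hexp_eq]
    calc ∫ t in Set.Ioi t₀, min 1 (A * Real.exp (-(t / b) ^ 2))
        ≤ ∫ t in Set.Ioi t₀, Real.exp (-((t - t₀) / b) ^ 2) :=
          setIntegral_mono_on hint.integrableOn hshift.integrableOn measurableSet_Ioi hkey
      _ = ∫ t in Set.Ioi (0:ℝ), Real.exp (-(t / b) ^ 2) := by
          have hmp : MeasurePreserving (fun x : ℝ => x + t₀) volume volume :=
            measurePreserving_add_right volume t₀
          have hemb : MeasurableEmbedding (fun x : ℝ => x + t₀) :=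
            (MeasurableEquiv.addRight t₀).measurableEmbedding
          have := hmp.setIntegral_preimage_emb hemb
            (fun y => Real.exp (-((y - t₀) / b) ^ 2)) (Set.Ioi t₀)
          rw [← this]
          have hpre : (fun x : ℝ => x + t₀) ⁻¹' Set.Ioi t₀ = Set.Ioi 0 := by
            ext x; simp
          rw [hpre]
          refine setIntegral_congr_fun measurableSet_Ioi fun x _ => ?_
          norm_num
      _ = b * Real.sqrt π / 2 := by
          rw [show (fun t : ℝ => Real.exp (-(t / b) ^ 2)) = fun t => Real.exp (-(1/b^2) * t ^ 2)
              from funext hexp_eq]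
          rw [integral_gaussian_Ioi]
          rw [show π / (1/b^2) = b^2 * π by field_simp, Real.sqrt_mul (by positivity),
            Real.sqrt_sq hb.le]
  linarith
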